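/- arXiv:2310.12096 — 7 statements merged into one kernel-verified Lean document; each statement's English description precedes it below -/
import Mathlib

section
/- For any directed weighted graph G on n vertices with source s and sink t, there exists a set of at most n − 1 (s,t)-cuts such that for every vital edge e of G, at least one cut in the set is a mincut for e (a least-capacity (s,t)-cut in which e contributes). -/
open Finset

set_option linter.unusedSectionVars false

variable {V : Type*} [Fintype V] [DecidableEq V]

/-- capacity of the cut given by the source-side vertex set `C`:
total capacity of edges with tail in `C` and head outside `C`. -/
noncomputable def cutCap (E : Finset (V × V)) (w : V × V → ℝ) (C : Finset V) : ℝ :=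
  ∑ e ∈ E.filter (fun e => e.1 ∈ C ∧ e.2 ∉ C), w e

/-- `C` is an (s,t)-cut. -/
def IsCut (s t : V) (C : Finset V) : Prop := s ∈ C ∧ t ∉ C

/-- edge `e` is a contributing (outgoing) edge of the cut `C`. -/
def Contributes (e : V × V) (C : Finset V) : Prop := e.1 ∈ C ∧ e.2 ∉ C

/-- `f` is a feasible (s,t)-flow on edge set `E` with capacities `w`. -/
structure IsFlow (E : Finset (V × V)) (w : V × V → ℝ) (s t : V) (f : V × V → ℝ) : Prop where
  nonneg : ∀ e ∈ E, 0 ≤ f e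
  le_cap : ∀ e ∈ E, f e ≤ w e
  support : ∀ e, e ∉ E → f e = 0
  conserve : ∀ v, v ≠ s → v ≠ t →
    ∑ e ∈ E.filter (fun e => e.1 = v), f e = ∑ e ∈ E.filter (fun e => e.2 = v), f e

/-- value of an (s,t)-flow: the net flow out of `s`. -/
noncomputable def flowValue (E : Finset (V × V)) (s : V) (f : V × V → ℝ) : ℝ :=
  ∑ e ∈ E.filter (fun e => e.1 = s), f e - ∑ e ∈ E.filter (fun e => e.2 = s), f e

/-- `f` is a maximum (s,t)-flow. -/
def IsMaxFlow (E : Finset (V × V)) (w : V × V → ℝ) (s t : V) (f : V × V → ℝ) : Prop :=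
  IsFlow E w s t f ∧ ∀ g, IsFlow E w s t g → flowValue E s g ≤ flowValue E s f

/-- capacity of a minimum (s,t)-cut. -/
noncomputable def minCutCap (E : Finset (V × V)) (w : V × V → ℝ) (s t : V) : ℝ :=
  sInf {x | ∃ C : Finset V, IsCut s t C ∧ cutCap E w C = x}

/-- `e` is a vital edge: deleting it strictly decreases the min (s,t)-cut capacity. -/
def Vital (E : Finset (V × V)) (w : V × V → ℝ) (s t : V) (e : V × V) : Prop :=
  e ∈ E ∧ minCutCap (E.erase e) w s t < minCutCap E w s t

/-- `C` is a mincut for the edge `e`: a least-capacity (s,t)-cut in which `e` contributes. -/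
def IsMincutFor (E : Finset (V × V)) (w : V × V → ℝ) (s t : V) (e : V × V)
    (C : Finset V) : Prop :=
  IsCut s t C ∧ Contributes e C ∧
    ∀ C', IsCut s t C' → Contributes e C' → cutCap E w C ≤ cutCap E w C'

/-- total flow on edges leaving the cut `C`. -/
noncomputable def flowOut (E : Finset (V × V)) (f : V × V → ℝ) (C : Finset V) : ℝ :=
  ∑ e ∈ E.filter (fun e => e.1 ∈ C ∧ e.2 ∉ C), f e

/-- total flow on edges entering the cut `C`. -/
noncomputable def flowIn (E : Finset (V × V)) (f : V × V → ℝ) (C : Finset V) : ℝ :=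
  ∑ e ∈ E.filter (fun e => e.1 ∉ C ∧ e.2 ∈ C), f e

namespace MincutCover

variable (E : Finset (V × V)) (w : V × V → ℝ) (s t : V)

/-- indicator vector of a finset -/
def ind (M : Finset V) : V → ℝ := fun x => if x ∈ M then 1 else 0

/-- `M` is the (unique) minimal mincut for the vital edge `e`. -/
def MinM (e : V × V) (M : Finset V) : Prop :=
  e ∈ E ∧ Vital E w s t e ∧ IsMincutFor E w s t e M ∧
    ∀ C, IsCut s t C → Contributes e C → cutCap E w C ≤ cutCap E w M → M ⊆ C

variable {E w s t}

lemma exists_min_cut (hst : s ≠ t) :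
    ∃ C₀ : Finset V, IsCut s t C₀ ∧ ∀ C, IsCut s t C → cutCap E w C₀ ≤ cutCap E w C := by
  classical
  have hne : ({s} : Finset V) ∈ (univ : Finset (Finset V)).filter (fun C => IsCut s t C) := by
    exact Finset.mem_filter.mpr ⟨Finset.mem_univ _, by simp [IsCut, Ne.symm hst]⟩
  obtain ⟨C₀, hC₀, hmin⟩ := Finset.exists_min_image
    ((univ : Finset (Finset V)).filter (fun C => IsCut s t C)) (cutCap E w) ⟨_, hne⟩
  refine ⟨C₀, (Finset.mem_filter.mp hC₀).2, fun C hC => hmin C ?_⟩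
  simp [hC]

lemma minCutCap_eq (hst : s ≠ t) :
    ∃ C₀ : Finset V, IsCut s t C₀ ∧ minCutCap E w s t = cutCap E w C₀ ∧
      ∀ C, IsCut s t C → minCutCap E w s t ≤ cutCap E w C := by
  obtain ⟨C₀, hC₀, hmin⟩ := exists_min_cut (E := E) (w := w) hst
  have hleast : IsLeast {x | ∃ C : Finset V, IsCut s t C ∧ cutCap E w C = x}
      (cutCap E w C₀) := by
    constructor
    · exact ⟨C₀, hC₀, rfl⟩
    · rintro x ⟨C, hC, rfl⟩
      exact hmin C hC
  have heq : minCutCap E w s t = cutCap E w C₀ := hleast.csInf_eq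
  exact ⟨C₀, hC₀, heq, fun C hC => heq ▸ hmin C hC⟩

lemma minCutCap_le_cut (hst : s ≠ t) {C : Finset V} (hC : IsCut s t C) :
    minCutCap E w s t ≤ cutCap E w C := by
  obtain ⟨C₀, _, _, h⟩ := minCutCap_eq (E := E) (w := w) hst
  exact h C hC

lemma cutCap_erase {e : V × V} (he : e ∈ E) (C : Finset V) :
    cutCap (E.erase e) w C
      = cutCap E w C - (if e.1 ∈ C ∧ e.2 ∉ C then w e else 0) := by
  classical
  unfold cutCap
  rw [Finset.filter_erase]
  by_cases h : e.1 ∈ C ∧ e.2 ∉ C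
  · have hmem : e ∈ E.filter (fun e => e.1 ∈ C ∧ e.2 ∉ C) := Finset.mem_filter.mpr ⟨he, h⟩
    rw [Finset.sum_erase_eq_sub hmem, if_pos h]
  · rw [Finset.erase_eq_of_notMem (by simp [Finset.mem_filter, h]), if_neg h, sub_zero]

lemma vital_spec (hst : s ≠ t) {e : V × V} (hv : Vital E w s t e) :
    ∃ D : Finset V, IsCut s t D ∧ Contributes e D ∧
      cutCap E w D - w e < minCutCap E w s t := by
  classical
  obtain ⟨he, hlt⟩ := hv
  obtain ⟨D, hD, hDeq, _⟩ := minCutCap_eq (E := E.erase e) (w := w) hst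
  have hDlt : cutCap (E.erase e) w D < minCutCap E w s t := hDeq ▸ hlt
  have hform := cutCap_erase (w := w) he D
  by_cases hcon : e.1 ∈ D ∧ e.2 ∉ D
  · refine ⟨D, hD, hcon, ?_⟩
    rw [hform, if_pos hcon] at hDlt
    exact hDlt
  · exfalso
    rw [hform, if_neg hcon, sub_zero] at hDlt
    exact absurd (minCutCap_le_cut (E := E) (w := w) hst hD) (not_le.mpr hDlt)

lemma submod_identity (A B : Finset V) :
    cutCap E w (A ∩ B) + cutCap E w (A ∪ B)
      + (∑ e ∈ E.filter (fun e => (e.1 ∈ A ∧ e.1 ∉ B) ∧ (e.2 ∈ B ∧ e.2 ∉ A)), w e)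
      + (∑ e ∈ E.filter (fun e => (e.1 ∈ B ∧ e.1 ∉ A) ∧ (e.2 ∈ A ∧ e.2 ∉ B)), w e)
      = cutCap E w A + cutCap E w B := by
  classical
  unfold cutCap
  simp only [Finset.sum_filter, ← Finset.sum_add_distrib]
  refine Finset.sum_congr rfl fun e _ => ?_
  by_cases h1 : e.1 ∈ A <;> by_cases h2 : e.1 ∈ B <;>
    by_cases h3 : e.2 ∈ A <;> by_cases h4 : e.2 ∈ B <;>
      simp [Finset.mem_inter, Finset.mem_union, h1, h2, h3, h4]

lemma sum_filter_nonneg (hpos : ∀ e ∈ E, 0 < w e) (p : V × V → Prop) [DecidablePred p] :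
    0 ≤ ∑ e ∈ E.filter p, w e :=
  Finset.sum_nonneg fun e he => le_of_lt (hpos e (Finset.mem_filter.mp he).1)

lemma submod_le (hpos : ∀ e ∈ E, 0 < w e) (A B : Finset V) :
    cutCap E w (A ∩ B) + cutCap E w (A ∪ B) ≤ cutCap E w A + cutCap E w B := by
  have h := submod_identity (E := E) (w := w) A B
  nlinarith [sum_filter_nonneg hpos (fun e => (e.1 ∈ A ∧ e.1 ∉ B) ∧ (e.2 ∈ B ∧ e.2 ∉ A)),
    sum_filter_nonneg hpos (fun e => (e.1 ∈ B ∧ e.1 ∉ A) ∧ (e.2 ∈ A ∧ e.2 ∉ B))]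

lemma submod_le_one (hpos : ∀ e ∈ E, 0 < w e) {A B : Finset V} {x : V × V}
    (hx : x ∈ E) (h1 : x.1 ∈ A) (h2 : x.1 ∉ B) (h3 : x.2 ∈ B) (h4 : x.2 ∉ A) :
    cutCap E w (A ∩ B) + cutCap E w (A ∪ B) + w x ≤ cutCap E w A + cutCap E w B := by
  have h := submod_identity (E := E) (w := w) A B
  have hx1 : w x ≤ ∑ e ∈ E.filter (fun e => (e.1 ∈ A ∧ e.1 ∉ B) ∧ (e.2 ∈ B ∧ e.2 ∉ A)), w e :=
    Finset.single_le_sum (fun e he => le_of_lt (hpos e (Finset.mem_filter.mp he).1))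
      (Finset.mem_filter.mpr ⟨hx, ⟨h1, h2⟩, h3, h4⟩)
  nlinarith [sum_filter_nonneg hpos (fun e => (e.1 ∈ B ∧ e.1 ∉ A) ∧ (e.2 ∈ A ∧ e.2 ∉ B))]

lemma submod_le_two (hpos : ∀ e ∈ E, 0 < w e) {A B : Finset V} {x y : V × V}
    (hx : x ∈ E) (h1 : x.1 ∈ A) (h2 : x.1 ∉ B) (h3 : x.2 ∈ B) (h4 : x.2 ∉ A)
    (hy : y ∈ E) (g1 : y.1 ∈ B) (g2 : y.1 ∉ A) (g3 : y.2 ∈ A) (g4 : y.2 ∉ B) :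
    cutCap E w (A ∩ B) + cutCap E w (A ∪ B) + w x + w y
      ≤ cutCap E w A + cutCap E w B := by
  have h := submod_identity (E := E) (w := w) A B
  have hx1 : w x ≤ ∑ e ∈ E.filter (fun e => (e.1 ∈ A ∧ e.1 ∉ B) ∧ (e.2 ∈ B ∧ e.2 ∉ A)), w e :=
    Finset.single_le_sum (fun e he => le_of_lt (hpos e (Finset.mem_filter.mp he).1))
      (Finset.mem_filter.mpr ⟨hx, ⟨h1, h2⟩, h3, h4⟩)
  have hy1 : w y ≤ ∑ e ∈ E.filter (fun e => (e.1 ∈ B ∧ e.1 ∉ A) ∧ (e.2 ∈ A ∧ e.2 ∉ B)), w e :=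
    Finset.single_le_sum (fun e he => le_of_lt (hpos e (Finset.mem_filter.mp he).1))
      (Finset.mem_filter.mpr ⟨hy, ⟨g1, g2⟩, g3, g4⟩)
  nlinarith

lemma exists_minimal_mincut (hpos : ∀ e ∈ E, 0 < w e) {e : V × V}
    (hne : ∃ C : Finset V, IsCut s t C ∧ Contributes e C) :
    ∃ M : Finset V, IsMincutFor E w s t e M ∧
      ∀ C, IsCut s t C → Contributes e C → cutCap E w C ≤ cutCap E w M → M ⊆ C := by
  classical
  obtain ⟨C₀, hC₀cut, hC₀con⟩ := hne
  set T : Finset (Finset V) :=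
    (univ : Finset (Finset V)).filter (fun C => IsCut s t C ∧ Contributes e C) with hT
  have hC₀T : C₀ ∈ T := by simp [hT, hC₀cut, hC₀con]
  obtain ⟨C₁, hC₁T, hC₁min⟩ := Finset.exists_min_image T (cutCap E w) ⟨_, hC₀T⟩
  set T' : Finset (Finset V) := T.filter (fun C => cutCap E w C ≤ cutCap E w C₁) with hT'
  have hC₁T' : C₁ ∈ T' := by simp [hT', hC₁T]
  obtain ⟨M, hMT', hMcard⟩ := Finset.exists_min_image T' Finset.card ⟨_, hC₁T'⟩
  have hMT : M ∈ T := (Finset.mem_filter.mp hMT').1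
  have hMle : cutCap E w M ≤ cutCap E w C₁ := (Finset.mem_filter.mp hMT').2
  have hMcut : IsCut s t M := ((Finset.mem_filter.mp hMT).2).1
  have hMcon : Contributes e M := ((Finset.mem_filter.mp hMT).2).2
  have hMmin : ∀ C, IsCut s t C → Contributes e C → cutCap E w M ≤ cutCap E w C := by
    intro C hC hcon
    exact le_trans hMle (hC₁min C (by simp [hT, hC, hcon]))
  refine ⟨M, ⟨hMcut, hMcon, hMmin⟩, ?_⟩
  intro C hCcut hCcon hCle
  -- uncross
  have hIcut : IsCut s t (M ∩ C) := by
    exact ⟨Finset.mem_inter.mpr ⟨hMcut.1, hCcut.1⟩, fun h => hMcut.2 (Finset.mem_inter.mp h).1⟩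
  have hIcon : Contributes e (M ∩ C) := by
    exact ⟨Finset.mem_inter.mpr ⟨hMcon.1, hCcon.1⟩, fun h => hMcon.2 (Finset.mem_inter.mp h).1⟩
  have hUcut : IsCut s t (M ∪ C) := by
    refine ⟨Finset.mem_union_left _ hMcut.1, fun h => ?_⟩
    rcases Finset.mem_union.mp h with h | h
    · exact hMcut.2 h
    · exact hCcut.2 h
  have hUcon : Contributes e (M ∪ C) := by
    refine ⟨Finset.mem_union_left _ hMcon.1, fun h => ?_⟩
    rcases Finset.mem_union.mp h with h | h
    · exact hMcon.2 h
    · exact hCcon.2 h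
  have hsub := submod_le (E := E) (w := w) hpos M C
  have hIge : cutCap E w M ≤ cutCap E w (M ∩ C) := hMmin _ hIcut hIcon
  have hUge : cutCap E w M ≤ cutCap E w (M ∪ C) := hMmin _ hUcut hUcon
  have hIle : cutCap E w (M ∩ C) ≤ cutCap E w C₁ := by
    have : cutCap E w (M ∩ C) ≤ cutCap E w M := by nlinarith
    exact le_trans this hMle
  have hIT' : M ∩ C ∈ T' := by simp [hT', hT, hIcut, hIcon, hIle]
  have hcardle : M.card ≤ (M ∩ C).card := hMcard _ hIT'
  have heq : M ∩ C = M :=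
    Finset.eq_of_subset_of_card_le Finset.inter_subset_left hcardle
  intro x hx
  have : x ∈ M ∩ C := heq.symm ▸ hx
  exact (Finset.mem_inter.mp this).2

lemma vital_exists_minM (hst : s ≠ t) (hpos : ∀ e ∈ E, 0 < w e) {e : V × V}
    (hv : Vital E w s t e) : ∃ M, MinM E w s t e M := by
  obtain ⟨D, hDcut, hDcon, _⟩ := vital_spec hst hv
  obtain ⟨M, hM, hMmin⟩ := exists_minimal_mincut (s := s) (t := t) hpos ⟨D, hDcut, hDcon⟩
  exact ⟨M, hv.1, hv, hM, hMmin⟩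

lemma minM_mu_lt (hst : s ≠ t) {e : V × V} {M : Finset V} (h : MinM E w s t e M) :
    cutCap E w M - w e < minCutCap E w s t := by
  obtain ⟨he, hv, ⟨hMcut, hMcon, hMmin⟩, _⟩ := h
  obtain ⟨D, hDcut, hDcon, hDlt⟩ := vital_spec hst hv
  have := hMmin D hDcut hDcon
  linarith

lemma key (hst : s ≠ t) (hpos : ∀ e ∈ E, 0 < w e) {e₁ e₂ : V × V} {M₁ M₂ : Finset V}
    (h1 : MinM E w s t e₁ M₁) (h2 : MinM E w s t e₂ M₂) (hne : M₁ ≠ M₂)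
    (hcap : cutCap E w M₂ ≤ cutCap E w M₁)
    (hcard : cutCap E w M₁ ≤ cutCap E w M₂ → M₂.card ≤ M₁.card) :
    (e₁.1 ∈ M₂ ↔ e₁.2 ∈ M₂) := by
  obtain ⟨he₁, hv₁, ⟨hM₁cut, hM₁con, hM₁min⟩, hM₁sub⟩ := h1
  obtain ⟨he₂, hv₂, ⟨hM₂cut, hM₂con, hM₂min⟩, hM₂sub⟩ := h2
  constructor
  · -- forward: u₁ ∈ M₂ → v₁ ∈ M₂
    intro hu
    by_contra hv
    -- M₂ is an e₁-cut, so cutCap M₁ ≤ cutCap M₂, hence equality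
    have hle : cutCap E w M₁ ≤ cutCap E w M₂ := hM₁min M₂ hM₂cut ⟨hu, hv⟩
    have hsub : M₁ ⊆ M₂ := hM₁sub M₂ hM₂cut ⟨hu, hv⟩ hcap
    have hcard' : M₂.card ≤ M₁.card := hcard hle
    exact hne (Finset.eq_of_subset_of_card_le hsub hcard')
  · -- backward: v₁ ∈ M₂ → u₁ ∈ M₂
    intro hv
    by_contra hu
    -- e₁ runs from M₁ \ M₂ to M₂ \ M₁
    have hu1 : e₁.1 ∈ M₁ := hM₁con.1
    have hv1 : e₁.2 ∉ M₁ := hM₁con.2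
    have hIcut : IsCut s t (M₁ ∩ M₂) :=
      ⟨Finset.mem_inter.mpr ⟨hM₁cut.1, hM₂cut.1⟩,
        fun h => hM₁cut.2 (Finset.mem_inter.mp h).1⟩
    have hUcut : IsCut s t (M₁ ∪ M₂) := by
      refine ⟨Finset.mem_union_left _ hM₁cut.1, fun h => ?_⟩
      rcases Finset.mem_union.mp h with h | h
      · exact hM₁cut.2 h
      · exact hM₂cut.2 h
    have hIF : minCutCap E w s t ≤ cutCap E w (M₁ ∩ M₂) := minCutCap_le_cut hst hIcut
    have hUF : minCutCap E w s t ≤ cutCap E w (M₁ ∪ M₂) := minCutCap_le_cut hst hUcut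
    have hmu1 : cutCap E w M₁ - w e₁ < minCutCap E w s t :=
      minM_mu_lt hst ⟨he₁, hv₁, ⟨hM₁cut, hM₁con, hM₁min⟩, hM₁sub⟩
    have hmu2 : cutCap E w M₂ - w e₂ < minCutCap E w s t :=
      minM_mu_lt hst ⟨he₂, hv₂, ⟨hM₂cut, hM₂con, hM₂min⟩, hM₂sub⟩
    by_cases hu2 : e₂.1 ∈ M₁
    · -- (a): e₂ crosses M₁ ∩ M₂
      have hIcon : Contributes e₂ (M₁ ∩ M₂) :=
        ⟨Finset.mem_inter.mpr ⟨hu2, hM₂con.1⟩,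
          fun h => hM₂con.2 (Finset.mem_inter.mp h).2⟩
      have hIge : cutCap E w M₂ ≤ cutCap E w (M₁ ∩ M₂) := hM₂min _ hIcut hIcon
      have hsm := submod_le_one hpos he₁ hu1 hu hv hv1
      linarith
    · by_cases hv2 : e₂.2 ∈ M₁
      · -- (b1): e₂ runs from M₂ \ M₁ to M₁ \ M₂
        have hsm := submod_le_two hpos he₁ hu1 hu hv hv1
          he₂ hM₂con.1 hu2 hv2 hM₂con.2
        linarith
      · -- (b2): e₂ crosses M₁ ∪ M₂
        have hUcon : Contributes e₂ (M₁ ∪ M₂) := by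
          refine ⟨Finset.mem_union_right _ hM₂con.1, fun h => ?_⟩
          rcases Finset.mem_union.mp h with h | h
          · exact hv2 h
          · exact hM₂con.2 h
        have hUge : cutCap E w M₂ ≤ cutCap E w (M₁ ∪ M₂) := hM₂min _ hUcut hUcon
        have hsm := submod_le_one hpos he₁ hu1 hu hv hv1
        linarith

/-- zero-coefficients lemma: dependencies among indicators of minimal mincuts vanish. -/
lemma zero_coeffs (hst : s ≠ t) (hpos : ∀ e ∈ E, 0 < w e) :
    ∀ (𝒢 : Finset (Finset V)), (∀ M ∈ 𝒢, ∃ e, MinM E w s t e M) →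
      ∀ σ : Finset V → ℝ, (∀ x : V, ∑ M ∈ 𝒢, σ M * ind M x = 0) →
        ∀ M ∈ 𝒢, σ M = 0 := by
  classical
  intro 𝒢
  induction 𝒢 using Finset.strongInduction with
  | _ 𝒢 ih =>
    intro h𝒢 σ hdep M₀ hM₀
    -- select the member with maximal capacity, among those maximal cardinality
    obtain ⟨Mc, hMc, hmaxc⟩ := Finset.exists_max_image 𝒢 (cutCap E w) ⟨M₀, hM₀⟩
    set Λ : Finset (Finset V) := 𝒢.filter (fun M => cutCap E w Mc ≤ cutCap E w M) with hΛ
    have hMcΛ : Mc ∈ Λ := by simp [hΛ, hMc]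
    obtain ⟨M₁, hM₁Λ, hmaxcard⟩ := Finset.exists_max_image Λ Finset.card ⟨_, hMcΛ⟩
    have hM₁𝒢 : M₁ ∈ 𝒢 := (Finset.mem_filter.mp hM₁Λ).1
    have hM₁cap : cutCap E w M₁ = cutCap E w Mc :=
      le_antisymm (hmaxc _ hM₁𝒢) (Finset.mem_filter.mp hM₁Λ).2
    have hcapall : ∀ M ∈ 𝒢, cutCap E w M ≤ cutCap E w M₁ := by
      intro M hM; rw [hM₁cap]; exact hmaxc _ hM
    have hcardall : ∀ M ∈ 𝒢, cutCap E w M₁ ≤ cutCap E w M → M.card ≤ M₁.card := by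
      intro M hM hle
      exact hmaxcard M (by simp [hΛ, hM, hM₁cap ▸ hle])
    obtain ⟨e₁, hMinM₁⟩ := h𝒢 M₁ hM₁𝒢
    have hu1 : e₁.1 ∈ M₁ := hMinM₁.2.2.1.2.1.1
    have hv1 : e₁.2 ∉ M₁ := hMinM₁.2.2.1.2.1.2
    -- the coefficient of M₁ vanishes
    have hσM₁ : σ M₁ = 0 := by
      have hsum : ∑ M ∈ 𝒢, (σ M * ind M e₁.1 - σ M * ind M e₁.2) = 0 := by
        rw [Finset.sum_sub_distrib, hdep e₁.1, hdep e₁.2, sub_zero]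
      have hzero : ∀ M ∈ 𝒢, M ≠ M₁ → σ M * ind M e₁.1 - σ M * ind M e₁.2 = 0 := by
        intro M hM hne
        obtain ⟨e₂, hMinM₂⟩ := h𝒢 M hM
        have hiff : (e₁.1 ∈ M ↔ e₁.2 ∈ M) :=
          key hst hpos hMinM₁ hMinM₂ (Ne.symm hne) (hcapall M hM)
            (hcardall M hM)
        unfold ind
        by_cases h : e₁.1 ∈ M
        · rw [if_pos h, if_pos (hiff.mp h)]; ring
        · rw [if_neg h, if_neg (fun hh => h (hiff.mpr hh))]; ring
      have := Finset.sum_eq_single_of_mem M₁ hM₁𝒢 hzero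
      rw [this] at hsum
      unfold ind at hsum
      rw [if_pos hu1, if_neg hv1] at hsum
      linarith
    by_cases hM₀M₁ : M₀ = M₁
    · rw [hM₀M₁]; exact hσM₁
    · refine ih (𝒢.erase M₁) (Finset.erase_ssubset hM₁𝒢)
        (fun M hM => h𝒢 M (Finset.mem_of_mem_erase hM)) σ ?_ M₀
        (Finset.mem_erase.mpr ⟨hM₀M₁, hM₀⟩)
      intro x
      rw [Finset.sum_erase_eq_sub hM₁𝒢, hdep x, hσM₁]
      ring

end MincutCover

/-- Mincut Cover: there is a set of at most `n - 1` (s,t)-cuts containing, for each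
vital edge `e`, at least one mincut for `e`. -/
theorem mincut_cover (E : Finset (V × V)) (w : V × V → ℝ) (s t : V)
    (hst : s ≠ t) (hpos : ∀ e ∈ E, 0 < w e) :
    ∃ 𝒞 : Finset (Finset V), 𝒞.card ≤ Fintype.card V - 1 ∧
      ∀ e ∈ E, Vital E w s t e → ∃ C ∈ 𝒞, IsMincutFor E w s t e C := by
  classical
  open MincutCover in
  -- choose the minimal mincut for each vital edge
  have hchoice : ∀ e : V × V, Vital E w s t e → ∃ M, MinM E w s t e M :=
    fun e hv => vital_exists_minM hst hpos hv
  set f : V × V → Finset V := fun e =>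
    if h : Vital E w s t e then Classical.choose (hchoice e h) else ∅ with hf
  set 𝒞 : Finset (Finset V) :=
    (E.filter (fun e => Vital E w s t e)).image f with h𝒞
  have hmem : ∀ M ∈ 𝒞, ∃ e, MinM E w s t e M := by
    intro M hM
    obtain ⟨e, he, rfl⟩ := Finset.mem_image.mp hM
    have hv : Vital E w s t e := (Finset.mem_filter.mp he).2
    refine ⟨e, ?_⟩
    rw [hf]; simp only [dif_pos hv]
    exact Classical.choose_spec (hchoice e hv)
  refine ⟨𝒞, ?_, ?_⟩
  · -- cardinality bound via linear independence of indicator vectors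
    set P : Finset (Finset V) := insert {t} 𝒞 with hP
    have hts : ({t} : Finset V) ∉ 𝒞 := by
      intro h
      obtain ⟨e, hMinM⟩ := hmem _ h
      have hscut : s ∈ ({t} : Finset V) := hMinM.2.2.1.1.1
      exact hst (Finset.mem_singleton.mp hscut)
    have hPcard : P.card = 𝒞.card + 1 := Finset.card_insert_of_notMem hts
    have hLI : LinearIndependent ℝ (fun (M : {M // M ∈ P}) => ind (M : Finset V)) := by
      rw [linearIndependent_iff']
      intro sfin g hsum i hi
      set σ : Finset V → ℝ := fun M =>
        if h : M ∈ P then (if (⟨M, h⟩ : {M // M ∈ P}) ∈ sfin then g ⟨M, h⟩ else 0) else 0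
        with hσ
      have hσval : ∀ j : {M // M ∈ P}, σ j.val = if j ∈ sfin then g j else 0 := by
        intro j
        rw [hσ]
        simp only [dif_pos j.2]
      have hA : ∀ x : V, ∑ M ∈ P, σ M * ind M x
          = ∑ j ∈ sfin, g j * ind (j : Finset V) x := by
        intro x
        rw [← Finset.sum_attach P (fun M => σ M * ind M x)]
        have : ∀ j ∈ P.attach, σ j.val * ind (j : Finset V) x
            = if j ∈ sfin then g j * ind (j : Finset V) x else 0 := by
          intro j _
          rw [hσval j]
          by_cases h : j ∈ sfin <;> simp [h]
        rw [Finset.sum_congr rfl this, Finset.sum_ite_mem,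
          Finset.inter_eq_right.mpr (fun j _ => Finset.mem_attach _ j)]
      have hdepP : ∀ x : V, ∑ M ∈ P, σ M * ind M x = 0 := by
        intro x
        rw [hA x]
        have := congrFun hsum x
        simpa [Finset.sum_apply] using this
      have hσt : σ ({t} : Finset V) = 0 := by
        have h0 := hdepP t
        rw [hP, Finset.sum_insert hts] at h0
        have hz : ∀ M ∈ 𝒞, σ M * ind M t = 0 := by
          intro M hM
          obtain ⟨e, hMinM⟩ := hmem _ hM
          have : t ∉ M := hMinM.2.2.1.1.2
          simp [ind, this]
        rw [Finset.sum_eq_zero hz] at h0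
        simpa [ind] using h0
      have hdep𝒞 : ∀ x : V, ∑ M ∈ 𝒞, σ M * ind M x = 0 := by
        intro x
        have h0 := hdepP x
        rw [hP, Finset.sum_insert hts, hσt] at h0
        simpa using h0
      have hzero := zero_coeffs hst hpos 𝒞 hmem σ hdep𝒞
      have : σ i.val = g i := by rw [hσval i, if_pos hi]
      rw [← this]
      rcases Finset.mem_insert.mp i.2 with h | h
      · rw [show i.val = ({t} : Finset V) from h]; exact hσt
      · exact hzero _ h
    have hcard := hLI.fintype_card_le_finrank
    rw [Module.finrank_fintype_fun_eq_card, Fintype.card_coe] at hcard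
    omega
  · intro e he hv
    refine ⟨f e, Finset.mem_image_of_mem f (Finset.mem_filter.mpr ⟨he, hv⟩), ?_⟩
    have : MinM E w s t e (f e) := by
      rw [hf]; simp only [dif_pos hv]
      exact Classical.choose_spec (hchoice e hv)
    exact this.2.2.1
end

section
/- Let E' be a set of vital edges, and let e ∈ E' be an edge whose mincut has least capacity among mincuts of all edges in E'; let C be a mincut for e. Then every vital edge e' ∈ E' that contributes to C has C as a mincut for e' as well. -/
open Finset

variable {V : Type*} [Fintype V] [DecidableEq V]

/-- if `e` has a mincut `C` of least capacity among mincuts of all edges in a set `E'`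
of vital edges, then `C` is a mincut for every edge of `E'` contributing to `C`. -/
theorem least_mincut_covers_contributing_edges (E E' : Finset (V × V))
    (w : V × V → ℝ) (s t : V) (hst : s ≠ t) (hpos : ∀ e ∈ E, 0 < w e)
    (hE' : E' ⊆ E) (hvit : ∀ e' ∈ E', Vital E w s t e')
    (e : V × V) (he : e ∈ E') (C : Finset V) (hC : IsMincutFor E w s t e C)
    (hleast : ∀ e' ∈ E', ∀ C', IsMincutFor E w s t e' C' →
      cutCap E w C ≤ cutCap E w C') :
    ∀ e' ∈ E', Contributes e' C → IsMincutFor E w s t e' C := by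
  intro e' he' hcon
  classical
  refine ⟨hC.1, hcon, fun C' hC' hcon' => ?_⟩
  obtain ⟨C'', hmem, hmin⟩ := Finset.exists_min_image
    ((Finset.univ : Finset (Finset V)).filter
      (fun D => IsCut s t D ∧ Contributes e' D)) (cutCap E w)
    ⟨C, by simp [hC.1, hcon]⟩
  simp only [Finset.mem_filter, Finset.mem_univ, true_and] at hmem
  have hmc : IsMincutFor E w s t e' C'' :=
    ⟨hmem.1, hmem.2, fun D hD hcD => hmin D (by simp [hD, hcD])⟩
  exact le_trans (hleast e' he' C'' hmc) (hmc.2.2 C' hC' hcon')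
end

section
/- Any mincut for a vital edge partitions an arbitrary set 𝓔 of vital edges into three disjoint classes: edges contributing to the cut, edges with both endpoints inside the cut, and edges with both endpoints outside the cut; in particular, no vital edge enters the cut (tail outside, head inside). -/
open Finset

variable {V : Type*} [Fintype V] [DecidableEq V]

section Aux

variable (E : Finset (V × V)) (w : V × V → ℝ) (s t : V)

lemma cutCap_eq_sum_ite (C : Finset V) :
    cutCap E w C = ∑ f ∈ E, if f.1 ∈ C ∧ f.2 ∉ C then w f else 0 := by
  rw [cutCap, Finset.sum_filter]

lemma cutCap_nonneg (hw : ∀ f ∈ E, 0 ≤ w f) (C : Finset V) : 0 ≤ cutCap E w C :=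
  Finset.sum_nonneg fun f hf => hw f (Finset.mem_filter.mp hf).1

lemma cutCap_erase {e : V × V} (he : e ∈ E) (C : Finset V) :
    cutCap E w C = cutCap (E.erase e) w C + (if e.1 ∈ C ∧ e.2 ∉ C then w e else 0) := by
  have h0 : cutCap E w C = cutCap (insert e (E.erase e)) w C := by
    rw [Finset.insert_erase he]
  rw [h0]
  unfold cutCap
  rw [Finset.filter_insert]
  split_ifs with h
  · rw [Finset.sum_insert (by simp), add_comm]
  · simp

lemma minCutCap_le (hw : ∀ f ∈ E, 0 ≤ w f) {C : Finset V} (hC : IsCut s t C) :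
    minCutCap E w s t ≤ cutCap E w C := by
  apply csInf_le
  · exact ⟨0, by rintro x ⟨D, _, rfl⟩; exact cutCap_nonneg E w (fun f hf => hw f hf) D⟩
  · exact ⟨C, hC, rfl⟩

lemma exists_minCut (hst : s ≠ t) :
    ∃ C : Finset V, IsCut s t C ∧ cutCap E w C = minCutCap E w s t := by
  have hne : {x | ∃ C : Finset V, IsCut s t C ∧ cutCap E w C = x}.Nonempty := by
    refine ⟨cutCap E w (Finset.univ.erase t), Finset.univ.erase t, ⟨?_, ?_⟩, rfl⟩
    · exact Finset.mem_erase.mpr ⟨hst, Finset.mem_univ s⟩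
    · simp
  have hfin : {x | ∃ C : Finset V, IsCut s t C ∧ cutCap E w C = x}.Finite := by
    apply Set.Finite.subset (Set.finite_range (cutCap E w))
    rintro x ⟨D, _, rfl⟩; exact ⟨D, rfl⟩
  obtain ⟨C, hC, hcap⟩ := hne.csInf_mem hfin
  exact ⟨C, hC, hcap⟩

/-- key submodularity-with-exchange inequality. -/
lemma submod_exchange (hw : ∀ f ∈ E, 0 ≤ w f) (C C' : Finset V) :
    cutCap E w (C ∩ C') + cutCap E w (C ∪ C') +
      (∑ f ∈ E, if (f.1 ∈ C ∧ f.1 ∉ C' ∧ f.2 ∉ C ∧ f.2 ∈ C') ∨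
          (f.1 ∉ C ∧ f.1 ∈ C' ∧ f.2 ∈ C ∧ f.2 ∉ C') then w f else 0)
      ≤ cutCap E w C + cutCap E w C' := by
  rw [cutCap_eq_sum_ite, cutCap_eq_sum_ite, cutCap_eq_sum_ite, cutCap_eq_sum_ite,
    ← Finset.sum_add_distrib, ← Finset.sum_add_distrib, ← Finset.sum_add_distrib]
  apply Finset.sum_le_sum
  intro f hf
  have hwf := hw f hf
  by_cases h1 : f.1 ∈ C <;> by_cases h2 : f.2 ∈ C <;>
    by_cases h3 : f.1 ∈ C' <;> by_cases h4 : f.2 ∈ C' <;>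
    simp [h1, h2, h3, h4, Finset.mem_inter, Finset.mem_union] <;> linarith

/-- from vitality: a cut through `e` of capacity `< minCutCap + w e`, which is moreover
least among all cuts of the erased graph. -/
lemma vital_cut (hst : s ≠ t) (hw : ∀ f ∈ E, 0 ≤ w f) {e : V × V}
    (hv : Vital E w s t e) :
    ∃ C : Finset V, IsCut s t C ∧ Contributes e C ∧
      cutCap E w C < minCutCap E w s t + w e := by
  obtain ⟨he, hlt⟩ := hv
  obtain ⟨C, hC, hcap⟩ := exists_minCut (E.erase e) w s t hst
  have hw' : ∀ f ∈ E.erase e, 0 ≤ w f := fun f hf => hw f (Finset.mem_erase.mp hf).2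
  have hsplit := cutCap_erase E w he C
  have hcontrib : e.1 ∈ C ∧ e.2 ∉ C := by
    by_contra h
    rw [if_neg h, add_zero] at hsplit
    have := minCutCap_le E w s t hw hC
    rw [hsplit, hcap] at this
    linarith
  refine ⟨C, hC, hcontrib, ?_⟩
  rw [hsplit, if_pos hcontrib, hcap]
  linarith

/-- the crucial step: no vital edge enters a mincut for a vital edge. -/
lemma no_vital_enters (hst : s ≠ t) (hpos : ∀ f ∈ E, 0 < w f)
    (e : V × V) (hvit : Vital E w s t e) (C : Finset V)
    (hC : IsMincutFor E w s t e C) (e' : V × V) (hvit' : Vital E w s t e') :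
    ¬ (e'.1 ∉ C ∧ e'.2 ∈ C) := by
  rintro ⟨hu, hv⟩
  have hw : ∀ f ∈ E, 0 ≤ w f := fun f hf => (hpos f hf).le
  obtain ⟨hCcut, ⟨ha, hb⟩, hCmin⟩ := hC
  -- a good cut for `e`, by vitality of `e`
  obtain ⟨D, hD, hDe, hDcap⟩ := vital_cut E w s t hst hw hvit
  have hCsmall : cutCap E w C < minCutCap E w s t + w e :=
    lt_of_le_of_lt (hCmin D hD hDe) hDcap
  -- a good cut for `e'`, by vitality of `e'`
  obtain ⟨C', hC'cut, ⟨hu', hv'⟩, hC'cap⟩ := vital_cut E w s t hst hw hvit'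
  -- the intersection and union cuts
  have hA : IsCut s t (C ∩ C') :=
    ⟨Finset.mem_inter.mpr ⟨hCcut.1, hC'cut.1⟩, fun h => hCcut.2 (Finset.mem_inter.mp h).1⟩
  have hB : IsCut s t (C ∪ C') := ⟨Finset.mem_union_left _ hCcut.1,
    fun h => (Finset.mem_union.mp h).elim hCcut.2 hC'cut.2⟩
  have hAm := minCutCap_le E w s t hw hA
  have hBm := minCutCap_le E w s t hw hB
  have hsub := submod_exchange E w hw C C'
  set X := ∑ f ∈ E, if (f.1 ∈ C ∧ f.1 ∉ C' ∧ f.2 ∉ C ∧ f.2 ∈ C') ∨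
      (f.1 ∉ C ∧ f.1 ∈ C' ∧ f.2 ∈ C ∧ f.2 ∉ C') then w f else 0 with hXdef
  have hXnonneg : ∀ f ∈ E, 0 ≤ (if (f.1 ∈ C ∧ f.1 ∉ C' ∧ f.2 ∉ C ∧ f.2 ∈ C') ∨
      (f.1 ∉ C ∧ f.1 ∈ C' ∧ f.2 ∈ C ∧ f.2 ∉ C') then w f else 0) := by
    intro f hf
    split_ifs
    · exact hw f hf
    · exact le_rfl
  have he'X : (e'.1 ∉ C ∧ e'.1 ∈ C' ∧ e'.2 ∈ C ∧ e'.2 ∉ C') := ⟨hu, hu', hv, hv'⟩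
  -- X ≥ w e'
  have hXe' : w e' ≤ X := by
    have := Finset.single_le_sum hXnonneg hvit'.1
    rwa [if_pos (Or.inr he'X)] at this
  by_cases h1 : e.1 ∈ C'
  · -- e contributes to C ∩ C'
    have hcontribA : Contributes e (C ∩ C') :=
      ⟨Finset.mem_inter.mpr ⟨ha, h1⟩, fun h => hb (Finset.mem_inter.mp h).1⟩
    have := hCmin _ hA hcontribA
    linarith
  · by_cases h2 : e.2 ∈ C'
    · -- bad case: e goes from C \ C' to C' \ C, so X ≥ w e + w e'
      have heX : (e.1 ∈ C ∧ e.1 ∉ C' ∧ e.2 ∉ C ∧ e.2 ∈ C') := ⟨ha, h1, hb, h2⟩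
      have hne : e ≠ e' := fun h => hu (h ▸ ha)
      have hXee' : w e + w e' ≤ X := by
        have hsubset : ({e, e'} : Finset (V × V)) ⊆ E := by
          intro f hf
          rcases Finset.mem_insert.mp hf with rfl | hf
          · exact hvit.1
          · exact (Finset.mem_singleton.mp hf) ▸ hvit'.1
        calc w e + w e' = ∑ f ∈ ({e, e'} : Finset (V × V)),
              (if (f.1 ∈ C ∧ f.1 ∉ C' ∧ f.2 ∉ C ∧ f.2 ∈ C') ∨
                (f.1 ∉ C ∧ f.1 ∈ C' ∧ f.2 ∈ C ∧ f.2 ∉ C') then w f else 0) := by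
              rw [Finset.sum_pair hne, if_pos (Or.inl heX), if_pos (Or.inr he'X)]
          _ ≤ X := Finset.sum_le_sum_of_subset_of_nonneg hsubset
              (fun f hf _ => hXnonneg f hf)
      linarith
    · -- e contributes to C ∪ C'
      have hcontribB : Contributes e (C ∪ C') := ⟨Finset.mem_union_left _ ha,
        fun h => (Finset.mem_union.mp h).elim hb h2⟩
      have := hCmin _ hB hcontribB
      linarith

end Aux

/-- a mincut for a vital edge partitions any set of vital edges into three classes:
contributing edges, edges inside, and edges outside; in particular no vital edge
enters the cut. -/
theorem mincut_partitions_vital_edges (E 𝓔 : Finset (V × V)) (w : V × V → ℝ)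
    (s t : V) (hst : s ≠ t) (hpos : ∀ e ∈ E, 0 < w e)
    (h𝓔 : 𝓔 ⊆ E) (hvit𝓔 : ∀ e' ∈ 𝓔, Vital E w s t e')
    (e : V × V) (hvit : Vital E w s t e) (C : Finset V)
    (hC : IsMincutFor E w s t e C) :
    ∀ e' ∈ 𝓔,
      ((e'.1 ∈ C ∧ e'.2 ∉ C) ∨ (e'.1 ∈ C ∧ e'.2 ∈ C) ∨ (e'.1 ∉ C ∧ e'.2 ∉ C)) ∧
      ¬ (e'.1 ∉ C ∧ e'.2 ∈ C) := by
  intro e' he'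
  have hno := no_vital_enters E w s t hst hpos e hvit C hC e' (hvit𝓔 e' he')
  refine ⟨?_, hno⟩
  by_cases h1 : e'.1 ∈ C <;> by_cases h2 : e'.2 ∈ C
  · exact Or.inr (Or.inl ⟨h1, h2⟩)
  · exact Or.inl ⟨h1, h2⟩
  · exact absurd ⟨h1, h2⟩ hno
  · exact Or.inr (Or.inr ⟨h1, h2⟩)
end

section
/- For any pair of mincuts C and C' of the same vital edge e = (p,q), no edge of G goes between C∖C' and C'∖C (in either direction). -/
open Finset

variable {V : Type*} [Fintype V] [DecidableEq V]

lemma cutCap_submod (E : Finset (V × V)) (w : V × V → ℝ) (C C' : Finset V) :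
    cutCap E w C + cutCap E w C' =
      cutCap E w (C ∩ C') + cutCap E w (C ∪ C')
        + ∑ a ∈ E.filter (fun a => (a.1 ∈ C ∧ a.1 ∉ C') ∧ (a.2 ∈ C' ∧ a.2 ∉ C)), w a
        + ∑ a ∈ E.filter (fun a => (a.1 ∈ C' ∧ a.1 ∉ C) ∧ (a.2 ∈ C ∧ a.2 ∉ C')), w a := by
  unfold cutCap
  simp only [Finset.sum_filter, ← Finset.sum_add_distrib]
  refine Finset.sum_congr rfl fun a _ => ?_
  simp only [Finset.mem_inter, Finset.mem_union]
  by_cases h1 : a.1 ∈ C <;> by_cases h2 : a.1 ∈ C' <;>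
    by_cases h3 : a.2 ∈ C <;> by_cases h4 : a.2 ∈ C' <;> simp [h1, h2, h3, h4]

/-- for any two mincuts `C`, `C'` of the same vital edge `e`, no edge of `G` goes
between `C ∖ C'` and `C' ∖ C` in either direction. -/
theorem no_edge_between_mincut_differences (E : Finset (V × V)) (w : V × V → ℝ)
    (s t : V) (hst : s ≠ t) (hpos : ∀ e ∈ E, 0 < w e)
    (e : V × V) (hvit : Vital E w s t e) (C C' : Finset V)
    (hC : IsMincutFor E w s t e C) (hC' : IsMincutFor E w s t e C') :
    ∀ e' ∈ E,
      ¬ ((e'.1 ∈ C ∧ e'.1 ∉ C') ∧ (e'.2 ∈ C' ∧ e'.2 ∉ C)) ∧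
      ¬ ((e'.1 ∈ C' ∧ e'.1 ∉ C) ∧ (e'.2 ∈ C ∧ e'.2 ∉ C')) := by
  intro e' he'
  obtain ⟨⟨hsC, htC⟩, ⟨h1C, h2C⟩, hminC⟩ := hC
  obtain ⟨⟨hsC', htC'⟩, ⟨h1C', h2C'⟩, hminC'⟩ := hC'
  have hcutI : IsCut s t (C ∩ C') := ⟨Finset.mem_inter.2 ⟨hsC, hsC'⟩,
    fun h => htC (Finset.mem_inter.1 h).1⟩
  have hcutU : IsCut s t (C ∪ C') := ⟨Finset.mem_union_left _ hsC,
    fun h => (Finset.mem_union.1 h).elim htC htC'⟩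
  have hconI : Contributes e (C ∩ C') := ⟨Finset.mem_inter.2 ⟨h1C, h1C'⟩,
    fun h => h2C (Finset.mem_inter.1 h).1⟩
  have hconU : Contributes e (C ∪ C') := ⟨Finset.mem_union_left _ h1C,
    fun h => (Finset.mem_union.1 h).elim h2C h2C'⟩
  have hA := hminC _ hcutI hconI
  have hB := hminC' _ hcutU hconU
  have hsub := cutCap_submod E w C C'
  set S1 := E.filter (fun a => (a.1 ∈ C ∧ a.1 ∉ C') ∧ (a.2 ∈ C' ∧ a.2 ∉ C)) with hS1
  set S2 := E.filter (fun a => (a.1 ∈ C' ∧ a.1 ∉ C) ∧ (a.2 ∈ C ∧ a.2 ∉ C')) with hS2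
  have hnn : ∀ (S : Finset (V × V)), S ⊆ E → ∀ a ∈ S, 0 ≤ w a :=
    fun S hS a ha => le_of_lt (hpos a (hS ha))
  have h1nn : (0:ℝ) ≤ ∑ a ∈ S1, w a :=
    Finset.sum_nonneg (hnn S1 (Finset.filter_subset _ _))
  have h2nn : (0:ℝ) ≤ ∑ a ∈ S2, w a :=
    Finset.sum_nonneg (hnn S2 (Finset.filter_subset _ _))
  have hle : (∑ a ∈ S1, w a) + (∑ a ∈ S2, w a) ≤ 0 := by linarith
  constructor
  · intro hcond
    have hm : e' ∈ S1 := Finset.mem_filter.2 ⟨he', hcond⟩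
    have : w e' ≤ ∑ a ∈ S1, w a :=
      Finset.single_le_sum (hnn S1 (Finset.filter_subset _ _)) hm
    have := hpos e' he'
    linarith
  · intro hcond
    have hm : e' ∈ S2 := Finset.mem_filter.2 ⟨he', hcond⟩
    have : w e' ≤ ∑ a ∈ S2, w a :=
      Finset.single_le_sum (hnn S2 (Finset.filter_subset _ _)) hm
    have := hpos e' he'
    linarith
end

section
/- The farthest mincut for an edge is unique: for any edge e, among the (s,t)-cuts of least capacity in which e is a contributing edge, there is exactly one cut C such that no other such cut C' satisfies C ⊊ C'. Moreover, the union of any two mincuts for e is again a mincut for e. -/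
open Finset

variable {V : Type*} [Fintype V] [DecidableEq V]

lemma cutCap_submodular (E : Finset (V × V)) (w : V × V → ℝ)
    (hw : ∀ e ∈ E, 0 ≤ w e) (C C' : Finset V) :
    cutCap E w (C ∪ C') + cutCap E w (C ∩ C') ≤ cutCap E w C + cutCap E w C' := by
  classical
  simp only [cutCap, Finset.sum_filter]
  rw [← Finset.sum_add_distrib, ← Finset.sum_add_distrib]
  apply Finset.sum_le_sum
  intro f hf
  have h0 := hw f hf
  by_cases h1 : f.1 ∈ C <;> by_cases h2 : f.1 ∈ C' <;>
    by_cases h3 : f.2 ∈ C <;> by_cases h4 : f.2 ∈ C' <;>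
    simp [Finset.mem_union, Finset.mem_inter, h1, h2, h3, h4] <;> linarith

/-- the union of two mincuts for an edge is a mincut for that edge, and the
farthest mincut for an edge is unique. -/
theorem farthest_mincut_unique (E : Finset (V × V)) (w : V × V → ℝ) (s t : V)
    (hst : s ≠ t) (hpos : ∀ e ∈ E, 0 < w e) (e : V × V) (he : e ∈ E)
    (hex : ∃ C : Finset V, IsCut s t C ∧ Contributes e C) :
    (∀ C C' : Finset V, IsMincutFor E w s t e C → IsMincutFor E w s t e C' →
        IsMincutFor E w s t e (C ∪ C')) ∧
    (∃! C : Finset V, IsMincutFor E w s t e C ∧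
        ∀ C', IsMincutFor E w s t e C' → ¬ C ⊂ C') := by
  classical
  have hwnn : ∀ f ∈ E, 0 ≤ w f := fun f hf => (hpos f hf).le
  have part1 : ∀ C C' : Finset V, IsMincutFor E w s t e C → IsMincutFor E w s t e C' →
      IsMincutFor E w s t e (C ∪ C') := by
    intro C C' hC hC'
    obtain ⟨⟨hsC, htC⟩, ⟨h1C, h2C⟩, hminC⟩ := hC
    obtain ⟨⟨hsC', htC'⟩, ⟨h1C', h2C'⟩, hminC'⟩ := hC'
    have hcutU : IsCut s t (C ∪ C') := ⟨Finset.mem_union_left _ hsC,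
      by simp [Finset.mem_union, htC, htC']⟩
    have hcontU : Contributes e (C ∪ C') := ⟨Finset.mem_union_left _ h1C,
      by simp [Finset.mem_union, h2C, h2C']⟩
    have hcutI : IsCut s t (C ∩ C') := ⟨Finset.mem_inter.2 ⟨hsC, hsC'⟩,
      by simp [Finset.mem_inter, htC]⟩
    have hcontI : Contributes e (C ∩ C') := ⟨Finset.mem_inter.2 ⟨h1C, h1C'⟩,
      by simp [Finset.mem_inter, h2C]⟩
    have hsub := cutCap_submodular E w hwnn C C'
    have hU := hminC _ hcutU hcontU
    have hI := hminC' _ hcutI hcontI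
    refine ⟨hcutU, hcontU, ?_⟩
    intro D hD hDc
    have := hminC D hD hDc
    linarith
  refine ⟨part1, ?_⟩
  have hSne : (Finset.univ.filter
      (fun C : Finset V => IsCut s t C ∧ Contributes e C)).Nonempty := by
    obtain ⟨C, h1, h2⟩ := hex
    exact ⟨C, by simp [h1, h2]⟩
  obtain ⟨C0, hC0mem, hC0min⟩ := Finset.exists_min_image _ (cutCap E w) hSne
  simp only [Finset.mem_filter, Finset.mem_univ, true_and] at hC0mem
  have hC0 : IsMincutFor E w s t e C0 := by
    refine ⟨hC0mem.1, hC0mem.2, ?_⟩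
    intro C' h1 h2
    exact hC0min C' (by simp [h1, h2])
  have hMne : (Finset.univ.filter (fun C : Finset V => IsMincutFor E w s t e C)).Nonempty :=
    ⟨C0, by simp [hC0]⟩
  obtain ⟨D, hDmem, hDmax⟩ := Finset.exists_max_image _ Finset.card hMne
  simp only [Finset.mem_filter, Finset.mem_univ, true_and] at hDmem
  have hDfar : ∀ C', IsMincutFor E w s t e C' → ¬ D ⊂ C' := by
    intro C' hC' hss
    have := hDmax C' (by simp [hC'])
    exact absurd (Finset.card_lt_card hss) (not_lt.2 this)
  refine ⟨D, ⟨hDmem, hDfar⟩, ?_⟩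
  rintro C ⟨hCmc, hCfar⟩
  have hU := part1 C D hCmc hDmem
  have hCeq : C = C ∪ D := by
    by_contra h
    exact hCfar _ hU (Finset.ssubset_iff_subset_ne.2 ⟨Finset.subset_union_left, h⟩)
  have hDeq : D = C ∪ D := by
    by_contra h
    exact hDfar _ hU (Finset.ssubset_iff_subset_ne.2 ⟨Finset.subset_union_right, h⟩)
  exact hCeq.trans hDeq.symm
end

section
/- Let E_λ be a set of edges each of whose mincut capacity equals λ > 0. Then there exists an edge e ∈ E_λ with farthest mincut C such that for every other edge e' ∈ E_λ that contributes to C, C is also the farthest mincut for e'. (Such an e can be chosen so that its farthest mincut has maximum size among farthest mincuts of edges in E_λ.) -/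
open Finset

variable {V : Type*} [Fintype V] [DecidableEq V]

/-- `C` is the farthest mincut for `e`: a mincut for `e` that is not a proper
subset of any other mincut for `e`. -/
def IsFarthestMincutFor (E : Finset (V × V)) (w : V × V → ℝ) (s t : V)
    (e : V × V) (C : Finset V) : Prop :=
  IsMincutFor E w s t e C ∧ ∀ C', IsMincutFor E w s t e C' → ¬ C ⊂ C'

/-- among edges whose mincut capacity equals `lam > 0`, there is an edge `e` whose
farthest mincut `C` is also the farthest mincut of every other edge of the set
contributing to `C`. -/
theorem farthest_mincut_property (E Elam : Finset (V × V)) (w : V × V → ℝ)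
    (s t : V) (hst : s ≠ t) (hpos : ∀ e ∈ E, 0 < w e)
    (lam : ℝ) (hlam : 0 < lam) (hsub : Elam ⊆ E) (hne : Elam.Nonempty)
    (hcap : ∀ e ∈ Elam, ∃ C : Finset V, IsMincutFor E w s t e C ∧ cutCap E w C = lam) :
    ∃ e ∈ Elam, ∃ C : Finset V, IsFarthestMincutFor E w s t e C ∧
      ∀ e' ∈ Elam, Contributes e' C → IsFarthestMincutFor E w s t e' C := by
  classical
  choose C0 hC0 hC0cap using hcap
  -- any cut to which an edge of Elam contributes has capacity ≥ lam
  have lamLe : ∀ e, ∀ he : e ∈ Elam, ∀ D : Finset V,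
      IsCut s t D → Contributes e D → lam ≤ cutCap E w D := by
    intro e he D hD hcon
    have h := (hC0 e he).2.2 D hD hcon
    rwa [hC0cap e he] at h
  set T : Finset ((V × V) × Finset V) :=
    Finset.univ.filter (fun p => p.1 ∈ Elam ∧ IsMincutFor E w s t p.1 p.2) with hT
  have hTne : T.Nonempty := by
    obtain ⟨e, he⟩ := hne
    exact ⟨(e, C0 e he), by simp [hT, he, hC0 e he]⟩
  obtain ⟨p, hpT, hpmax⟩ := T.exists_max_image (fun p => p.2.card) hTne
  simp only [hT, Finset.mem_filter, Finset.mem_univ, true_and] at hpT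
  obtain ⟨heElam, hMC⟩ := hpT
  set e := p.1
  set C := p.2
  -- the capacity of C is lam
  have hCcap : cutCap E w C = lam := by
    have h1 : cutCap E w C ≤ lam := by
      have := hMC.2.2 (C0 e heElam) (hC0 e heElam).1 (hC0 e heElam).2.1
      rwa [hC0cap e heElam] at this
    exact le_antisymm h1 (lamLe e heElam C hMC.1 hMC.2.1)
  -- maximality of card
  have hmax : ∀ e' ∈ Elam, ∀ C' : Finset V, IsMincutFor E w s t e' C' →
      C'.card ≤ C.card := by
    intro e' he' C' hC'
    exact hpmax (e', C') (by simp [hT, he', hC'])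
  -- C is a mincut for any e' ∈ Elam contributing to it
  have hminfor : ∀ e' ∈ Elam, Contributes e' C → IsMincutFor E w s t e' C := by
    intro e' he' hcon
    refine ⟨hMC.1, hcon, fun D hD hconD => ?_⟩
    rw [hCcap]
    exact lamLe e' he' D hD hconD
  -- farthestness via maximal cardinality
  have hfar : ∀ e' ∈ Elam, Contributes e' C → IsFarthestMincutFor E w s t e' C := by
    intro e' he' hcon
    refine ⟨hminfor e' he' hcon, fun C' hC' hsub => ?_⟩
    exact absurd (hmax e' he' C' hC') (not_le.mpr (Finset.card_lt_card hsub))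
  exact ⟨e, heElam, C, hfar e heElam hMC.2.1, hfar⟩
end

section
/- Let C and C' be (s,t)-cuts that are both mincuts for the same contributing edge e and have equal capacity λ, with C∖C' nonempty. Then C ∪ C' is also an (s,t)-cut of capacity λ in which e contributes, and C' is a proper subset of C ∪ C'. -/
open Finset

variable {V : Type*} [Fintype V] [DecidableEq V]

lemma cutCap_eq_sum (E : Finset (V × V)) (w : V × V → ℝ) (C : Finset V) :
    cutCap E w C = ∑ e ∈ E, if e.1 ∈ C ∧ e.2 ∉ C then w e else 0 := by
  rw [cutCap, Finset.sum_filter]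

lemma cutCap_submod_s17 (E : Finset (V × V)) (w : V × V → ℝ)
    (hw : ∀ e ∈ E, 0 ≤ w e) (C C2 : Finset V) :
    cutCap E w (C ∩ C2) + cutCap E w (C ∪ C2) ≤ cutCap E w C + cutCap E w C2 := by
  simp only [cutCap_eq_sum, ← Finset.sum_add_distrib]
  apply Finset.sum_le_sum
  intro x hx
  have h := hw x hx
  by_cases h1 : x.1 ∈ C <;> by_cases h2 : x.1 ∈ C2 <;>
    by_cases h3 : x.2 ∈ C <;> by_cases h4 : x.2 ∈ C2 <;>
    simp [h1, h2, h3, h4, Finset.mem_inter, Finset.mem_union] <;> linarith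

/-- if `C` and `C'` are both mincuts of capacity `lam` for a contributing edge `e`
and `C ∖ C'` is nonempty, then `C ∪ C'` is an (s,t)-cut of capacity `lam` in which
`e` contributes, and `C'` is a proper subset of `C ∪ C'`. -/
theorem union_of_mincuts (E : Finset (V × V)) (w : V × V → ℝ) (s t : V)
    (hw : ∀ e ∈ E, 0 ≤ w e) (e : V × V) (lam : ℝ) (C C' : Finset V)
    (hC : IsMincutFor E w s t e C) (hC' : IsMincutFor E w s t e C')
    (hCcap : cutCap E w C = lam) (hC'cap : cutCap E w C' = lam)
    (hdiff : (C \ C').Nonempty) :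
    IsCut s t (C ∪ C') ∧ Contributes e (C ∪ C') ∧
      cutCap E w (C ∪ C') = lam ∧ C' ⊂ C ∪ C' := by
  obtain ⟨⟨hsC, htC⟩, ⟨he1C, he2C⟩, hminC⟩ := hC
  obtain ⟨⟨hsC2, htC2⟩, ⟨he1C2, he2C2⟩, hminC2⟩ := hC'
  have hcutU : IsCut s t (C ∪ C') := ⟨Finset.mem_union_left _ hsC, by
    simp [Finset.mem_union, htC, htC2]⟩
  have hconU : Contributes e (C ∪ C') := ⟨Finset.mem_union_left _ he1C, by
    simp [Finset.mem_union, he2C, he2C2]⟩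
  have hcutI : IsCut s t (C ∩ C') := ⟨Finset.mem_inter.2 ⟨hsC, hsC2⟩, by
    simp [Finset.mem_inter, htC]⟩
  have hconI : Contributes e (C ∩ C') := ⟨Finset.mem_inter.2 ⟨he1C, he1C2⟩, by
    simp [Finset.mem_inter, he2C]⟩
  have hI := hminC _ hcutI hconI
  have hU := hminC _ hcutU hconU
  have hsub := cutCap_submod_s17 E w hw C C'
  refine ⟨hcutU, hconU, by linarith, ?_⟩
  obtain ⟨x, hx⟩ := hdiff
  rw [Finset.mem_sdiff] at hx
  exact ⟨Finset.subset_union_right, fun h => hx.2 (h (Finset.mem_union_left _ hx.1))⟩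
end
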